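/- Let P be a proper strong C-hyperideal of a commutative multiplicative hyperring H. Then P is sdf-absorbing if and only if for all nonzero x, y ∈ H \ P with x∘y ⊆ P, there exist no nonzero a, b ∈ H with a − b = x and a + b = y. -/
import Mathlib


open Pointwise

/-- A commutative multiplicative hyperring structure on an abelian group `H`. -/
structure MulHyperring (H : Type*) [AddCommGroup H] where
  hmul : H → H → Set H
  hmul_nonempty : ∀ x y : H, (hmul x y).Nonempty
  hmul_comm : ∀ x y : H, hmul x y = hmul y x
  hmul_assoc : ∀ x y z : H, (⋃ a ∈ hmul y z, hmul x a) = ⋃ b ∈ hmul x y, hmul b z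
  hmul_distrib : ∀ x y z : H, hmul x (y + z) ⊆ hmul x y + hmul x z
  hmul_neg : ∀ x y : H, hmul x (-y) = -(hmul x y)

namespace Hyper

variable {H : Type*} [AddCommGroup H] (mul : H → H → Set H)

/-- `P` is a hyperideal. -/
def IsIdeal (P : Set H) : Prop :=
  (0 : H) ∈ P ∧ (∀ x ∈ P, ∀ y ∈ P, x - y ∈ P) ∧ ∀ r : H, ∀ x ∈ P, mul r x ⊆ P

/-- Hyperproduct `a ∘ b₁ ∘ ⋯ ∘ bₙ`. -/
def hprod : H → List H → Set H
  | a, [] => {a}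
  | a, b :: l => ⋃ t ∈ mul a b, hprod t l

/-- `C` is a finite hyperproduct `c₁ ∘ ⋯ ∘ cₙ`. -/
def IsProduct (C : Set H) : Prop := ∃ (a : H) (l : List H), C = hprod mul a l

/-- `D` is a finite (nonempty) sum of finite hyperproducts. -/
def IsSum (D : Set H) : Prop :=
  ∃ L : List (Set H), L ≠ [] ∧ (∀ C ∈ L, IsProduct mul C) ∧ D = L.sum

/-- `P` is a `𝒞`-hyperideal. -/
def IsCIdeal (P : Set H) : Prop :=
  IsIdeal mul P ∧ ∀ C : Set H, IsProduct mul C → (C ∩ P).Nonempty → C ⊆ P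

/-- `P` is a strong `𝒞`-hyperideal. -/
def IsStrongCIdeal (P : Set H) : Prop :=
  IsIdeal mul P ∧ ∀ D : Set H, IsSum mul D → (D ∩ P).Nonempty → D ⊆ P

/-- The hypersquare `x² = x ∘ x`. -/
def sq (x : H) : Set H := mul x x

/-- `P` is an sdf-absorbing hyperideal. -/
def IsSdf (P : Set H) : Prop :=
  IsIdeal mul P ∧ P ≠ Set.univ ∧
    ∀ x y : H, x ≠ 0 → y ≠ 0 → sq mul x - sq mul y ⊆ P → x - y ∈ P ∨ x + y ∈ P

/-- `P` is a weakly sdf-absorbing hyperideal. -/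
def IsWeaklySdf (P : Set H) : Prop :=
  IsIdeal mul P ∧ P ≠ Set.univ ∧
    ∀ x y : H, x ≠ 0 → y ≠ 0 → (0 : H) ∉ sq mul x - sq mul y →
      sq mul x - sq mul y ⊆ P → x - y ∈ P ∨ x + y ∈ P

/-- `P` is a prime hyperideal. -/
def IsPrime (P : Set H) : Prop :=
  IsIdeal mul P ∧ P ≠ Set.univ ∧ ∀ x y : H, mul x y ⊆ P → x ∈ P ∨ y ∈ P

/-- The radical: intersection of the prime hyperideals containing `P`. -/
def rad (P : Set H) : Set H := ⋂₀ {Q : Set H | IsPrime mul Q ∧ P ⊆ Q}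

/-- `hpow mul x n` is the hyperpower `x^(n+1)`. -/
def hpow (x : H) (n : ℕ) : Set H := hprod mul x (List.replicate n x)

/-- `x` is nilpotent: `0 ∈ xⁿ` for some `n`. -/
def IsNilpotent (x : H) : Prop := ∃ n : ℕ, (0 : H) ∈ hpow mul x n

/-- `x` is a regular element: `x ∈ x² ∘ y` for some `y`. -/
def IsRegularElem (x : H) : Prop := ∃ y : H, x ∈ ⋃ t ∈ sq mul x, mul t y

/-- The hyperideal generated by a set `S`. -/
def span (S : Set H) : Set H := ⋂₀ {Q : Set H | IsIdeal mul Q ∧ S ⊆ Q}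

/-- `P` is a maximal hyperideal. -/
def IsMaximal (P : Set H) : Prop :=
  IsIdeal mul P ∧ P ≠ Set.univ ∧
    ∀ B : Set H, IsIdeal mul B → P ⊆ B → B = P ∨ B = Set.univ

end Hyper

/-- Componentwise hypermultiplication on a product. -/
def prodMul {H₁ H₂ : Type*} (m₁ : H₁ → H₁ → Set H₁) (m₂ : H₂ → H₂ → Set H₂) :
    H₁ × H₂ → H₁ × H₂ → Set (H₁ × H₂) :=
  fun a b => (m₁ a.1 b.1) ×ˢ (m₂ a.2 b.2)

namespace Stmt3Aux

variable {H : Type*} [AddCommGroup H] (M : MulHyperring H)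

/-- The auxiliary sum of products `a² + ab + (-a)b + (-b)b`. -/
def E (a b : H) : Set H :=
  M.hmul a a + (M.hmul a b + (M.hmul (-a) b + M.hmul (-b) b))

lemma hprod_single (c d : H) : Hyper.hprod M.hmul c [d] = M.hmul c d := by
  simp [Hyper.hprod]

lemma hmul_neg_left (a b : H) : M.hmul (-a) b = -(M.hmul a b) := by
  rw [M.hmul_comm, M.hmul_neg, M.hmul_comm]

lemma isSum_E (a b : H) : Hyper.IsSum M.hmul (E M a b) := by
  refine ⟨[M.hmul a a, M.hmul a b, M.hmul (-a) b, M.hmul (-b) b], by simp, ?_, ?_⟩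
  · intro C hC
    simp only [List.mem_cons, List.not_mem_nil, or_false] at hC
    rcases hC with rfl | rfl | rfl | rfl
    · exact ⟨a, [a], (hprod_single M a a).symm⟩
    · exact ⟨a, [b], (hprod_single M a b).symm⟩
    · exact ⟨-a, [b], (hprod_single M (-a) b).symm⟩
    · exact ⟨-b, [b], (hprod_single M (-b) b).symm⟩
  · simp [E, List.sum_cons, add_assoc]

lemma sub_sq_subset_E (a b : H) :
    Hyper.sq M.hmul a - Hyper.sq M.hmul b ⊆ E M a b := by
  intro z hz
  obtain ⟨u, hu, v, hv, rfl⟩ := Set.mem_sub.1 hz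
  obtain ⟨w, hw⟩ := M.hmul_nonempty a b
  have hw' : -w ∈ M.hmul (-a) b := by
    rw [hmul_neg_left]; exact Set.neg_mem_neg.2 hw
  have hv' : -v ∈ M.hmul (-b) b := by
    rw [hmul_neg_left]; exact Set.neg_mem_neg.2 hv
  have heq : u - v = u + (w + (-w + -v)) := by abel
  rw [heq]
  exact Set.add_mem_add hu (Set.add_mem_add hw (Set.add_mem_add hw' hv'))

lemma hmul_subset_E (a b : H) :
    M.hmul (a - b) (a + b) ⊆ E M a b := by
  intro z hz
  rw [M.hmul_comm, sub_eq_add_neg] at hz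
  have hz1 := M.hmul_distrib (a + b) a (-b) hz
  obtain ⟨u, hu, v, hv, rfl⟩ := Set.mem_add.1 hz1
  rw [M.hmul_comm] at hu
  obtain ⟨p, hp, q, hq, rfl⟩ := Set.mem_add.1 (M.hmul_distrib a a b hu)
  rw [M.hmul_neg] at hv
  have hv2 : -v ∈ M.hmul (a + b) b := Set.mem_neg.1 hv
  rw [M.hmul_comm] at hv2
  obtain ⟨r, hr, s, hs, hrs⟩ := Set.mem_add.1 (M.hmul_distrib b a b hv2)
  have hr' : -r ∈ M.hmul (-a) b := by
    rw [hmul_neg_left, M.hmul_comm]; exact Set.neg_mem_neg.2 hr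
  have hs' : -s ∈ M.hmul (-b) b := by
    rw [hmul_neg_left]; exact Set.neg_mem_neg.2 hs
  have heq : p + q + v = p + (q + (-r + -s)) := by
    have hveq : v = -(r + s) := by rw [hrs]; simp
    rw [hveq]; abel
  rw [heq]
  exact Set.add_mem_add hp (Set.add_mem_add hq (Set.add_mem_add hr' hs'))

end Stmt3Aux

/-- a proper strong `𝒞`-hyperideal `P` is sdf-absorbing iff whenever
`x ∘ y ⊆ P` for nonzero `x, y ∉ P`, the system `a - b = x`, `a + b = y` has no
solution with `a, b` nonzero. -/
theorem stmt3 {H : Type*} [AddCommGroup H] (M : MulHyperring H) (P : Set H)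
    (hS : Hyper.IsStrongCIdeal M.hmul P) (hproper : P ≠ Set.univ) :
    Hyper.IsSdf M.hmul P ↔
      ∀ x y : H, x ≠ 0 → y ≠ 0 → x ∉ P → y ∉ P → M.hmul x y ⊆ P →
        ¬ ∃ a b : H, a ≠ 0 ∧ b ≠ 0 ∧ a - b = x ∧ a + b = y := by
  constructor
  · rintro hsdf x y hx hy hxP hyP hxy ⟨a, b, ha, hb, rfl, rfl⟩
    -- E meets P via (a-b)(a+b) ⊆ P
    obtain ⟨z, hz⟩ := M.hmul_nonempty (a - b) (a + b)
    have hEP : Stmt3Aux.E M a b ⊆ P :=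
      hS.2 _ (Stmt3Aux.isSum_E M a b) ⟨z, Stmt3Aux.hmul_subset_E M a b hz, hxy hz⟩
    have hsub : Hyper.sq M.hmul a - Hyper.sq M.hmul b ⊆ P :=
      fun t ht => hEP (Stmt3Aux.sub_sq_subset_E M a b ht)
    rcases hsdf.2.2 a b ha hb hsub with h | h
    · exact hxP h
    · exact hyP h
  · intro hcond
    refine ⟨hS.1, hproper, ?_⟩
    intro x y hx hy hsub
    by_contra hcon
    push_neg at hcon
    obtain ⟨h1, h2⟩ := hcon
    have hu : x - y ≠ 0 := by
      intro h; rw [h] at h1; exact h1 hS.1.1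
    have hv : x + y ≠ 0 := by
      intro h; rw [h] at h2; exact h2 hS.1.1
    -- sq x - sq y is nonempty and ⊆ P, so E ⊆ P
    obtain ⟨t, ht⟩ := M.hmul_nonempty x x
    obtain ⟨s, hs⟩ := M.hmul_nonempty y y
    have hts : t - s ∈ Hyper.sq M.hmul x - Hyper.sq M.hmul y :=
      Set.sub_mem_sub ht hs
    have hEP : Stmt3Aux.E M x y ⊆ P :=
      hS.2 _ (Stmt3Aux.isSum_E M x y)
        ⟨t - s, Stmt3Aux.sub_sq_subset_E M x y hts, hsub hts⟩
    have hmulP : M.hmul (x - y) (x + y) ⊆ P :=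
      fun z hz => hEP (Stmt3Aux.hmul_subset_E M x y hz)
    exact hcond (x - y) (x + y) hu hv h1 h2 hmulP ⟨x, y, hx, hy, rfl, rfl⟩
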